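/- Let L > 0, C₁ > 0, C₂ > 0 be real numbers and q₁ < q₂ positive real numbers, and let h > 0. Set ħ₁ = (L/C₁)^{1/q₁}, ħ₂ = (L/C₂)^{1/q₂}, h* = (C₁/C₂)^{1/(q₂-q₁)}, and βᵢ = min(L, Cᵢ·h^{qᵢ}) for i = 1, 2. Let X₁ and X₂ be independent real random variables on a probability space (Ω, ℙ), with Xᵢ uniformly distributed on [0, βᵢ]. If h* ≤ min(ħ₁, ħ₂) and ħ₂ ≤ h ≤ ħ₁, then ℙ{X₁ ≤ X₂} = 1 - (1/2)·(h/ħ₁)^{q₁}. -/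

import Mathlib

open MeasureTheory ProbabilityTheory


lemma unif_le_prob {Ω : Type*} [MeasurableSpace Ω] (P : Measure Ω) [IsProbabilityMeasure P]
    (β₁ β₂ : ℝ) (hb₁ : 0 < β₁) (hle : β₁ ≤ β₂)
    (X₁ X₂ : Ω → ℝ) (hX₁ : Measurable X₁) (hX₂ : Measurable X₂)
    (hindep : IndepFun X₁ X₂ P)
    (h1 : Measure.map X₁ P = volume.withDensity
      (fun x => ENNReal.ofReal ((Set.Icc (0:ℝ) β₁).indicator (fun _ => 1 / β₁) x)))
    (h2 : Measure.map X₂ P = volume.withDensity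
      (fun x => ENNReal.ofReal ((Set.Icc (0:ℝ) β₂).indicator (fun _ => 1 / β₂) x))) :
    P {ω | X₁ ω ≤ X₂ ω} = ENNReal.ofReal (1 - β₁ / (2 * β₂)) := by
  have hb₂ : 0 < β₂ := hb₁.trans_le hle
  -- rewrite the laws as smul of restricted volume
  have hdens : ∀ (β : ℝ),
      (fun x => ENNReal.ofReal ((Set.Icc (0:ℝ) β).indicator (fun _ => 1 / β) x)) =
      (Set.Icc (0:ℝ) β).indicator (fun _ => ENNReal.ofReal (1 / β)) := by
    intro β
    funext x
    by_cases hx : x ∈ Set.Icc (0:ℝ) β <;> simp [Set.indicator_apply, hx]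
  have hμ1 : Measure.map X₁ P =
      ENNReal.ofReal (1 / β₁) • volume.restrict (Set.Icc (0:ℝ) β₁) := by
    rw [h1, hdens, withDensity_indicator measurableSet_Icc, withDensity_const]
  have hμ2 : Measure.map X₂ P =
      ENNReal.ofReal (1 / β₂) • volume.restrict (Set.Icc (0:ℝ) β₂) := by
    rw [h2, hdens, withDensity_indicator measurableSet_Icc, withDensity_const]
  have hS : MeasurableSet {p : ℝ × ℝ | p.1 ≤ p.2} :=
    measurableSet_le measurable_fst measurable_snd
  have hmap : Measure.map (fun ω => (X₁ ω, X₂ ω)) P =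
      (Measure.map X₁ P).prod (Measure.map X₂ P) :=
    (indepFun_iff_map_prod_eq_prod_map_map hX₁.aemeasurable hX₂.aemeasurable).mp hindep
  have hset : {ω | X₁ ω ≤ X₂ ω} = (fun ω => (X₁ ω, X₂ ω)) ⁻¹' {p : ℝ × ℝ | p.1 ≤ p.2} := rfl
  rw [hset, ← Measure.map_apply (hX₁.prodMk hX₂) hS, hmap, hμ1, hμ2]
  rw [Measure.prod_apply hS]
  -- pointwise value of inner measure
  have key : ∀ x ∈ Set.Icc (0:ℝ) β₁,
      (ENNReal.ofReal (1 / β₂) • volume.restrict (Set.Icc (0:ℝ) β₂))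
        (Prod.mk x ⁻¹' {p : ℝ × ℝ | p.1 ≤ p.2}) =
      ENNReal.ofReal (1 / β₂) * ENNReal.ofReal (β₂ - x) := by
    intro x hx
    have hpre : Prod.mk x ⁻¹' {p : ℝ × ℝ | p.1 ≤ p.2} = Set.Ici x := rfl
    rw [hpre, Measure.smul_apply, smul_eq_mul,
      Measure.restrict_apply measurableSet_Ici]
    have : Set.Ici x ∩ Set.Icc (0:ℝ) β₂ = Set.Icc x β₂ := by
      ext y
      simp only [Set.mem_inter_iff, Set.mem_Ici, Set.mem_Icc]
      constructor
      · rintro ⟨h1, h2, h3⟩; exact ⟨h1, h3⟩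
      · rintro ⟨h1, h2⟩; exact ⟨h1, hx.1.trans h1, h2⟩
    rw [this, Real.volume_Icc]
  rw [lintegral_smul_measure]
  rw [setLIntegral_congr_fun measurableSet_Icc key]
  rw [lintegral_const_mul _ (by fun_prop)]
  have hInt : ∫⁻ x in Set.Icc (0:ℝ) β₁, ENNReal.ofReal (β₂ - x) =
      ENNReal.ofReal (β₂ * β₁ - β₁ ^ 2 / 2) := by
    have hInteg : IntegrableOn (fun x : ℝ => β₂ - x) (Set.Icc (0:ℝ) β₁) volume :=
      (continuous_const.sub continuous_id).integrableOn_Icc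
    rw [← ofReal_integral_eq_lintegral_ofReal hInteg
      (Filter.Eventually.mono (ae_restrict_mem measurableSet_Icc)
        (fun x hx => by simp only [Pi.zero_apply]; linarith [hx.2]))]
    congr 1
    rw [MeasureTheory.integral_Icc_eq_integral_Ioc,
      ← intervalIntegral.integral_of_le hb₁.le]
    rw [intervalIntegral.integral_sub (intervalIntegrable_const)
      intervalIntegral.intervalIntegrable_id]
    simp [integral_id]
    ring
  rw [hInt, ← ENNReal.ofReal_mul (by positivity), smul_eq_mul, ← ENNReal.ofReal_mul (by positivity)]
  congr 1
  field_simp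
/-- If h* ≤ min(ℏ₁,ℏ₂) and ℏ₂ ≤ h ≤ ℏ₁, then P{X₁ ≤ X₂} = 1 - (1/2)·(h/ℏ₁)^q₁. -/
theorem prob_dist_case2_mid2
    {Ω : Type*} [MeasurableSpace Ω] (P : Measure Ω) [IsProbabilityMeasure P]
    (L C₁ C₂ q₁ q₂ h : ℝ) (hL : 0 < L) (hC₁ : 0 < C₁) (hC₂ : 0 < C₂)
    (hq₁ : 0 < q₁) (hq : q₁ < q₂) (hh : 0 < h)
    (ℏ₁ ℏ₂ hstar β₁ β₂ : ℝ)
    (hℏ₁ : ℏ₁ = (L / C₁) ^ (1 / q₁)) (hℏ₂ : ℏ₂ = (L / C₂) ^ (1 / q₂))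
    (hstar_def : hstar = (C₁ / C₂) ^ (1 / (q₂ - q₁)))
    (hβ₁ : β₁ = min L (C₁ * h ^ q₁)) (hβ₂ : β₂ = min L (C₂ * h ^ q₂))
    (X₁ X₂ : Ω → ℝ) (hX₁ : Measurable X₁) (hX₂ : Measurable X₂)
    (hindep : IndepFun X₁ X₂ P)
    (hX₁unif : Measure.map X₁ P =
      volume.withDensity
        (fun x => ENNReal.ofReal ((Set.Icc (0:ℝ) β₁).indicator (fun _ => 1 / β₁) x)))
    (hX₂unif : Measure.map X₂ P =
      volume.withDensity
        (fun x => ENNReal.ofReal ((Set.Icc (0:ℝ) β₂).indicator (fun _ => 1 / β₂) x)))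
    (hcase : hstar ≤ min ℏ₁ ℏ₂) (hrange₁ : ℏ₂ ≤ h) (hrange₂ : h ≤ ℏ₁) :
    P {ω | X₁ ω ≤ X₂ ω} = ENNReal.ofReal (1 - (1/2) * (h / ℏ₁) ^ q₁) := by
  have hq₂ : 0 < q₂ := hq₁.trans hq
  have hLC₁ : (0:ℝ) < L / C₁ := div_pos hL hC₁
  have hLC₂ : (0:ℝ) < L / C₂ := div_pos hL hC₂
  have hℏ₁q : ℏ₁ ^ q₁ = L / C₁ := by
    rw [hℏ₁, one_div, Real.rpow_inv_rpow hLC₁.le hq₁.ne']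
  have hℏ₂q : ℏ₂ ^ q₂ = L / C₂ := by
    rw [hℏ₂, one_div, Real.rpow_inv_rpow hLC₂.le hq₂.ne']
  have hℏ₁pos : 0 < ℏ₁ := hh.trans_le hrange₂
  have h1 : C₁ * h ^ q₁ ≤ L := by
    have := Real.rpow_le_rpow hh.le hrange₂ hq₁.le
    rw [hℏ₁q] at this
    rw [← le_div_iff₀' hC₁]
    exact this
  have h2 : L ≤ C₂ * h ^ q₂ := by
    have h' : ℏ₂ ^ q₂ ≤ h ^ q₂ := by
      apply Real.rpow_le_rpow _ hrange₁ hq₂.le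
      rw [hℏ₂]; positivity
    rw [hℏ₂q, div_le_iff₀ hC₂] at h'
    linarith [h']
  have hb₁ : β₁ = C₁ * h ^ q₁ := by rw [hβ₁, min_eq_right h1]
  have hb₂ : β₂ = L := by rw [hβ₂, min_eq_left h2]
  have hβ₁pos : 0 < β₁ := by rw [hb₁]; positivity
  have hβle : β₁ ≤ β₂ := by rw [hb₁, hb₂]; exact h1
  rw [unif_le_prob P β₁ β₂ hβ₁pos hβle X₁ X₂ hX₁ hX₂ hindep hX₁unif hX₂unif]
  congr 1
  rw [Real.div_rpow hh.le hℏ₁pos.le, hℏ₁q, hb₁, hb₂]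
  have hhq : 0 < h ^ q₁ := Real.rpow_pos_of_pos hh q₁
  field_simp
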